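/- The compact operators K(H) are order dense in B(H): for every positive operator h ∈ B(H), h is the least upper bound in B(H) of the set { k ∈ K(H) : 0 ≤ k ≤ h }. -/

import Mathlib

open scoped InnerProductSpace

open ContinuousLinearMap in
/-- A continuous linear map whose range lies in a finite-dimensional submodule is compact. -/
lemma isCompactOperator_of_range_le_fd {H : Type} [NormedAddCommGroup H]
    [InnerProductSpace ℂ H] (f : H →L[ℂ] H) (U : Submodule ℂ H) [FiniteDimensional ℂ U]
    (hf : ∀ x, f x ∈ U) : IsCompactOperator f := by
  haveI : ProperSpace U := FiniteDimensional.proper ℂ U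
  rw [← ContinuousLinearMap.coe_coe f,
    isCompactOperator_iff_image_closedBall_subset_compact (f : H →ₗ[ℂ] H) one_pos]
  refine ⟨((↑) : U → H) '' Metric.closedBall 0 ‖f‖, ?_, ?_⟩
  · exact ((isCompact_closedBall _ _).image continuous_subtype_val)
  · rintro y ⟨x, hx, rfl⟩
    refine ⟨⟨f x, hf x⟩, ?_, rfl⟩
    simp only [Metric.mem_closedBall, dist_zero_right] at hx ⊢
    calc ‖(⟨f x, hf x⟩ : U)‖ = ‖f x‖ := rfl
      _ ≤ ‖f‖ * ‖x‖ := f.le_opNorm x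
      _ ≤ ‖f‖ * 1 := by gcongr
      _ = ‖f‖ := mul_one _

/-- The compact operators are order dense in `B(H)`: every positive
`h ∈ B(H)` is the least upper bound (in the Loewner order on `B(H)`) of the set of
compact operators `k` with `0 ≤ k ≤ h`. -/
theorem compacts_orderDense_in_boundedOperators
    {H : Type} [NormedAddCommGroup H] [InnerProductSpace ℂ H] [CompleteSpace H]
    (h : H →L[ℂ] H) (hh : 0 ≤ h) :
    IsLUB {k : H →L[ℂ] H | IsCompactOperator k ∧ 0 ≤ k ∧ k ≤ h} h := by
  classical
  constructor
  · rintro k ⟨-, -, hk⟩; exact hk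
  · intro b hb
    -- `0` belongs to the set, so `b` is nonneg, hence self-adjoint.
    have hb0 : (0 : H →L[ℂ] H) ≤ b := by
      refine hb ⟨?_, le_refl 0, hh⟩
      exact isCompactOperator_zero
    set s : H →L[ℂ] H := CFC.sqrt h with hs_def
    have hs0 : (0 : H →L[ℂ] H) ≤ s := CFC.sqrt_nonneg (a := h)
    have hss : s * s = h := CFC.sqrt_mul_sqrt_self h hh
    have hsa : IsSelfAdjoint s := IsSelfAdjoint.of_nonneg hs0
    rw [ContinuousLinearMap.le_def]
    have hbsa : IsSelfAdjoint b := by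
      have := (ContinuousLinearMap.nonneg_iff_isPositive b).mp hb0
      exact this.isSelfAdjoint
    have hhsa : IsSelfAdjoint h := by
      have := (ContinuousLinearMap.nonneg_iff_isPositive h).mp hh
      exact this.isSelfAdjoint
    refine ⟨ContinuousLinearMap.isSelfAdjoint_iff_isSymmetric.mp (hbsa.sub hhsa), fun x => ?_⟩
    -- construct the rank-one compression of `h` along `s x`
    set v : H := s x with hv_def
    set U : Submodule ℂ H := ℂ ∙ v with hU_def
    haveI : FiniteDimensional ℂ U := by
      rw [hU_def]; infer_instance
    set p : H →L[ℂ] H := U.subtypeL ∘L Submodule.orthogonalProjection U with hp_def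
    have hp_mem : ∀ y : H, p y ∈ U := fun y => (Submodule.orthogonalProjection U y).2
    have hp_apply_mem : ∀ y ∈ U, p y = y := fun y hy => by
      simp only [hp_def, ContinuousLinearMap.comp_apply, Submodule.subtypeL_apply]
      exact (Submodule.starProjection_eq_self_iff (K := U)).mpr hy
    have hp_pos : p.IsPositive := by
      refine ⟨ContinuousLinearMap.isSelfAdjoint_iff_isSymmetric.mp (isSelfAdjoint_starProjection U), fun y => ?_⟩
      have horth : ⟪y - p y, p y⟫_ℂ = 0 :=
        Submodule.starProjection_inner_eq_zero (K := U) y (p y) (hp_mem y)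
      have : ⟪p y, y⟫_ℂ = ⟪p y, p y⟫_ℂ := by
        have := congrArg (starRingEnd ℂ) horth
        rw [inner_conj_symm, map_zero] at this
        rw [inner_sub_right] at this
        linear_combination this
      rw [ContinuousLinearMap.reApplyInnerSelf, this]
      exact inner_self_nonneg
    have hone_sub_p_pos : (1 - p).IsPositive := by
      refine ⟨ContinuousLinearMap.isSelfAdjoint_iff_isSymmetric.mp ((ContinuousLinearMap.isPositive_one (E := H) (𝕜 := ℂ)).isSelfAdjoint.sub hp_pos.isSelfAdjoint), fun y => ?_⟩
      have horth : ⟪y - p y, p y⟫_ℂ = 0 :=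
        Submodule.starProjection_inner_eq_zero (K := U) y (p y) (hp_mem y)
      have : ⟪y - p y, y⟫_ℂ = ⟪y - p y, y - p y⟫_ℂ := by
        rw [inner_sub_right]
        linear_combination horth
      rw [ContinuousLinearMap.reApplyInnerSelf]
      simp only [ContinuousLinearMap.sub_apply, ContinuousLinearMap.one_apply]
      rw [this]
      exact inner_self_nonneg
    set k : H →L[ℂ] H := s ∘L p ∘L s with hk_def
    have hk_pos : k.IsPositive := by
      have := hp_pos.conj_adjoint s
      rwa [hsa.adjoint_eq] at this
    have hk_le : k ≤ h := by
      rw [ContinuousLinearMap.le_def]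
      have := hone_sub_p_pos.conj_adjoint s
      rw [hsa.adjoint_eq] at this
      convert this using 1
      rw [← hss]
      ext y
      simp [hk_def, ContinuousLinearMap.mul_apply, map_sub]
    have hk_compact : IsCompactOperator k := by
      refine isCompactOperator_of_range_le_fd k (U.map (s : H →ₗ[ℂ] H)) ?_
      intro y
      exact ⟨p (s y), hp_mem _, rfl⟩
    have hk_mem : k ∈ {k : H →L[ℂ] H | IsCompactOperator k ∧ 0 ≤ k ∧ k ≤ h} :=
      ⟨hk_compact, (ContinuousLinearMap.nonneg_iff_isPositive k).mpr hk_pos, hk_le⟩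
    have hk_le_b : k ≤ b := hb hk_mem
    have hkx : k x = h x := by
      have hvU : v ∈ U := Submodule.mem_span_singleton_self v
      have : p v = v := hp_apply_mem v hvU
      calc k x = s (p (s x)) := rfl
        _ = s (s x) := by rw [← hv_def, this]
        _ = (s * s) x := rfl
        _ = h x := by rw [hss]
    have := ((ContinuousLinearMap.le_def k b).mp hk_le_b).2 x
    rwa [ContinuousLinearMap.reApplyInnerSelf, ContinuousLinearMap.sub_apply, hkx,
      ← ContinuousLinearMap.sub_apply, ← ContinuousLinearMap.reApplyInnerSelf] at this
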